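/- Uniform bound on cross-correlation coefficients away from resonance: if p ≠ 3(j−1) and j ≠ 3(p−1), then |C_{jp}^k| ≤ 2^{j+p+1} √((2j+1)(2p+1)) · ((4j)^{j+1} − (3+j+p)^{j+1}) · ((4p)^{p+1} − (3+j+p)^{p+1}) / ( (3(j−1)−p)(3(p−1)−j)(3+j+p)^{j+p} ) for all k ∈ ℕ₀; in particular the bound is uniform in k. -/
import Mathlib


open Finset

/-- The recurrence defining the normalized coefficients `B̃_m^j`
(indexing: `X j m` means `B̃_m^j`). -/
def BtildeRec (X : ℕ → ℕ → ℝ) : Prop :=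
  X 0 0 = 1 ∧ X 1 0 = Real.sqrt 3 ∧ X 1 1 = -(Real.sqrt 3 / 2) ∧
  ∀ j : ℕ, 1 ≤ j →
    (X (j+1) 0 = Real.sqrt ((2*(j:ℝ)+3)/(2*(j:ℝ)-1)) * X (j-1) 0) ∧
    (∀ m : ℕ, 1 ≤ m → m ≤ j - 1 →
      X (j+1) m
        = Real.sqrt ((2*(j:ℝ)+3)/(2*(j:ℝ)-1)) * (((j:ℝ)-1)/((j:ℝ)+1))^m * X (j-1) m
          - Real.sqrt ((2*(j:ℝ)+1)*(2*(j:ℝ)+3)/((2*(j:ℝ)+2)^2)) *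
              ((j:ℝ)/((j:ℝ)+1))^(m-1) * X j (m-1)) ∧
    (X (j+1) j
      = -(Real.sqrt ((2*(j:ℝ)+1)*(2*(j:ℝ)+3)/((2*(j:ℝ)+2)^2)) *
          ((j:ℝ)/((j:ℝ)+1))^(j-1) * X j (j-1))) ∧
    (X (j+1) (j+1)
      = -(Real.sqrt ((2*(j:ℝ)+1)*(2*(j:ℝ)+3)/((2*(j:ℝ)+2)^2)) *
          ((j:ℝ)/((j:ℝ)+1))^j * X j j))

/-- The cross-correlation coefficients `C_{jp}^k` expressed through the
normalized coefficients `B̃`. -/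
noncomputable def crossC (X : ℕ → ℕ → ℝ) (j p k : ℕ) : ℝ :=
  (-1:ℝ)^j * (1 + (-1:ℝ)^k) *
    ∑ m ∈ Finset.range (j+1), ∑ q ∈ Finset.range (p+1),
      (((k+2+j+p).factorial : ℝ) * (4*(j:ℝ))^m * (4*(p:ℝ))^q
          / ((k+2+j+p+m+q).factorial : ℝ)) * X j m * X p q


lemma fact_mul_pow_le (N s c : ℕ) (h : c ≤ N+1) :
    N.factorial * c^s ≤ (N+s).factorial := by
  induction s with
  | zero => simp
  | succ s ih =>
    calc N.factorial * c^(s+1) = (N.factorial * c^s) * c := by ring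
    _ ≤ (N+s).factorial * (N+s+1) := Nat.mul_le_mul ih (by omega)
    _ = (N+s+1).factorial := by rw [Nat.factorial_succ]; ring

lemma ratio_le (N s c : ℕ) (hc : 0 < c) (h : c ≤ N+1) :
    ((N.factorial:ℝ)) / ((N+s).factorial) ≤ (1/(c:ℝ))^s := by
  have h1 : (0:ℝ) < ((N+s).factorial : ℝ) := by exact_mod_cast (N+s).factorial_pos
  have h2 : (0:ℝ) < (c:ℝ)^s := by positivity
  rw [div_le_iff₀ h1, div_pow, one_pow, div_mul_eq_mul_div, le_div_iff₀ h2, one_mul]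
  exact_mod_cast fact_mul_pow_le N s c h

lemma sqrt_helper1 (a : ℝ) (ha : 1 ≤ a) :
    Real.sqrt ((2*a+3)/(2*a-1)) * Real.sqrt (2*a-1) = Real.sqrt (2*a+3) := by
  have h1 : (0:ℝ) < 2*a-1 := by linarith
  rw [← Real.sqrt_mul (by positivity), div_mul_cancel₀ _ h1.ne']

lemma sqrt_helper2 (a : ℝ) (ha : 0 ≤ a) :
    Real.sqrt ((2*a+1)*(2*a+3)/((2*a+2)^2)) * Real.sqrt (2*a+1) ≤ Real.sqrt (2*a+3) := by
  rw [← Real.sqrt_mul (by positivity)]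
  apply Real.sqrt_le_sqrt
  rw [div_mul_eq_mul_div, div_le_iff₀ (by positivity)]
  nlinarith

lemma Xbound (X : ℕ → ℕ → ℝ) (hX : BtildeRec X) :
    ∀ j, ∀ m ≤ j, |X j m| ≤ 2^j * Real.sqrt (2*(j:ℝ)+1) := by
  obtain ⟨h00, h10, h11, hrec⟩ := hX
  intro j
  induction j using Nat.strong_induction_on with
  | _ j ih =>
    match j with
    | 0 =>
      intro m hm
      interval_cases m
      rw [h00]
      norm_num [Real.sqrt_one]
    | 1 =>
      intro m hm
      have h3 : (0:ℝ) ≤ Real.sqrt 3 := Real.sqrt_nonneg 3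
      have e : 2*((1:ℕ):ℝ)+1 = 3 := by norm_num
      rw [e]
      interval_cases m
      · rw [h10, abs_of_nonneg h3]; nlinarith
      · rw [h11, abs_neg, abs_of_nonneg (by positivity)]; nlinarith
    | (n+2) =>
      intro m hm
      obtain ⟨hA, hB, hC, hD⟩ := hrec (n+1) (by omega)
      have hIH0 := ih n (by omega)
      have hIH1 := ih (n+1) (by omega)
      set a : ℝ := ((n+1 : ℕ) : ℝ) with hadef
      have ha1 : (1:ℝ) ≤ a := by rw [hadef]; exact_mod_cast Nat.succ_le_succ (Nat.zero_le n)
      have e0 : (2*(n:ℝ)+1) = 2*a-1 := by rw [hadef]; push_cast; ring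
      have e2 : (2*((n+2:ℕ):ℝ)+1) = 2*a+3 := by rw [hadef]; push_cast; ring
      rw [e2]
      simp only [e0] at hIH0
      simp only [Nat.add_sub_cancel] at hA hB hC hD
      have hs1 : (0:ℝ) ≤ Real.sqrt ((2*a+3)/(2*a-1)) := Real.sqrt_nonneg _
      have hs2 : (0:ℝ) ≤ Real.sqrt ((2*a+1)*(2*a+3)/((2*a+2)^2)) := Real.sqrt_nonneg _
      have hsq3 : (0:ℝ) ≤ Real.sqrt (2*a+3) := Real.sqrt_nonneg _
      have hra : (0:ℝ) ≤ (a-1)/(a+1) := div_nonneg (by linarith) (by linarith)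
      have hr1 : ∀ s : ℕ, ((a-1)/(a+1))^s ≤ 1 := by
        intro s; apply pow_le_one₀ hra (by rw [div_le_one (by linarith)]; linarith)
      have hr2 : ∀ s : ℕ, (a/(a+1))^s ≤ 1 := by
        intro s; apply pow_le_one₀ (by positivity) (by rw [div_le_one (by linarith)]; linarith)
      -- key sub-bounds
      have key1 : ∀ s : ℕ, Real.sqrt ((2*a+3)/(2*a-1)) * ((a-1)/(a+1))^s * |X n s|
            ≤ 2^n * Real.sqrt (2*a+3) → True := fun _ _ => trivial
      have bnd2 : ∀ s ≤ n+1, Real.sqrt ((2*a+1)*(2*a+3)/((2*a+2)^2)) * (a/(a+1))^(s:ℕ) * |X (n+1) s|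
            ≤ 2^(n+1) * Real.sqrt (2*a+3) := by
        intro s hs
        calc Real.sqrt ((2*a+1)*(2*a+3)/((2*a+2)^2)) * (a/(a+1))^s * |X (n+1) s|
            ≤ Real.sqrt ((2*a+1)*(2*a+3)/((2*a+2)^2)) * 1 * (2^(n+1) * Real.sqrt (2*a+1)) := by
              apply mul_le_mul (mul_le_mul_of_nonneg_left (hr2 s) hs2) (hIH1 s hs)
                (abs_nonneg _) (by positivity)
          _ = 2^(n+1) * (Real.sqrt ((2*a+1)*(2*a+3)/((2*a+2)^2)) * Real.sqrt (2*a+1)) := by ring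
          _ ≤ 2^(n+1) * Real.sqrt (2*a+3) := by
              apply mul_le_mul_of_nonneg_left (sqrt_helper2 a (by linarith)) (by positivity)
      have bnd1 : ∀ s ≤ n, Real.sqrt ((2*a+3)/(2*a-1)) * ((a-1)/(a+1))^(s:ℕ) * |X n s|
            ≤ 2^n * Real.sqrt (2*a+3) := by
        intro s hs
        calc Real.sqrt ((2*a+3)/(2*a-1)) * ((a-1)/(a+1))^s * |X n s|
            ≤ Real.sqrt ((2*a+3)/(2*a-1)) * 1 * (2^n * Real.sqrt (2*a-1)) := by
              apply mul_le_mul (mul_le_mul_of_nonneg_left (hr1 s) hs1) (hIH0 s hs)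
                (abs_nonneg _) (by positivity)
          _ = 2^n * (Real.sqrt ((2*a+3)/(2*a-1)) * Real.sqrt (2*a-1)) := by ring
          _ = 2^n * Real.sqrt (2*a+3) := by rw [sqrt_helper1 a ha1]
      have hpow : (2:ℝ)^n + 2^(n+1) ≤ 2^(n+2) := by
        have : (0:ℝ) < 2^n := by positivity
        rw [pow_succ, pow_succ, pow_succ]; nlinarith
      have h2n : (2:ℝ)^n ≤ 2^(n+2) := by
        apply pow_le_pow_right₀ (by norm_num) (by omega)
      have h2n1 : (2:ℝ)^(n+1) ≤ 2^(n+2) := by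
        apply pow_le_pow_right₀ (by norm_num) (by omega)
      have hcases : m = 0 ∨ (1 ≤ m ∧ m ≤ n) ∨ m = n+1 ∨ m = n+2 := by omega
      obtain rfl | ⟨hm1, hm2⟩ | rfl | rfl := hcases
      · show |X (n+1+1) 0| ≤ _
        rw [hA, abs_mul, abs_of_nonneg hs1]
        have := bnd1 0 (Nat.zero_le n)
        simp only [pow_zero, mul_one] at this
        calc Real.sqrt ((2*a+3)/(2*a-1)) * |X n 0| ≤ 2^n * Real.sqrt (2*a+3) := by
              simpa using this
          _ ≤ 2^(n+2) * Real.sqrt (2*a+3) := mul_le_mul_of_nonneg_right h2n hsq3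
      · show |X (n+1+1) m| ≤ _
        rw [hB m hm1 (by omega)]
        calc |Real.sqrt ((2*a+3)/(2*a-1)) * ((a-1)/(a+1))^m * X n m
              - Real.sqrt ((2*a+1)*(2*a+3)/((2*a+2)^2)) * (a/(a+1))^(m-1) * X (n+1) (m-1)|
            ≤ |Real.sqrt ((2*a+3)/(2*a-1)) * ((a-1)/(a+1))^m * X n m|
              + |Real.sqrt ((2*a+1)*(2*a+3)/((2*a+2)^2)) * (a/(a+1))^(m-1) * X (n+1) (m-1)| :=
              abs_sub _ _
          _ ≤ 2^n * Real.sqrt (2*a+3) + 2^(n+1) * Real.sqrt (2*a+3) := by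
              apply add_le_add
              · rw [abs_mul, abs_mul, abs_of_nonneg hs1, abs_of_nonneg (pow_nonneg hra m)]
                exact bnd1 m hm2
              · rw [abs_mul, abs_mul, abs_of_nonneg hs2, abs_of_nonneg (by positivity)]
                exact bnd2 (m-1) (by omega)
          _ ≤ 2^(n+2) * Real.sqrt (2*a+3) := by nlinarith
      · show |X (n+1+1) (n+1)| ≤ _
        rw [hC, abs_neg, abs_mul, abs_mul, abs_of_nonneg hs2, abs_of_nonneg (by positivity)]
        calc Real.sqrt ((2*a+1)*(2*a+3)/((2*a+2)^2)) * (a/(a+1))^n * |X (n+1) n|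
            ≤ 2^(n+1) * Real.sqrt (2*a+3) := bnd2 n (by omega)
          _ ≤ 2^(n+2) * Real.sqrt (2*a+3) := mul_le_mul_of_nonneg_right h2n1 hsq3
      · show |X (n+1+1) (n+1+1)| ≤ _
        rw [hD, abs_neg, abs_mul, abs_mul, abs_of_nonneg hs2, abs_of_nonneg (by positivity)]
        calc Real.sqrt ((2*a+1)*(2*a+3)/((2*a+2)^2)) * (a/(a+1))^(n+1) * |X (n+1) (n+1)|
            ≤ 2^(n+1) * Real.sqrt (2*a+3) := bnd2 (n+1) (by omega)
          _ ≤ 2^(n+2) * Real.sqrt (2*a+3) := mul_le_mul_of_nonneg_right h2n1 hsq3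

theorem crossC_uniform_bound (X : ℕ → ℕ → ℝ) (hX : BtildeRec X) (j p : ℕ)
    (hp : (p:ℝ) ≠ 3*((j:ℝ)-1)) (hj : (j:ℝ) ≠ 3*((p:ℝ)-1)) :
    ∀ k : ℕ,
      |crossC X j p k|
        ≤ 2^(j+p+1) * Real.sqrt ((2*(j:ℝ)+1)*(2*(p:ℝ)+1)) *
            (((4*(j:ℝ))^(j+1) - (3+(j:ℝ)+(p:ℝ))^(j+1)) *
              ((4*(p:ℝ))^(p+1) - (3+(j:ℝ)+(p:ℝ))^(p+1)))
          / ((3*((j:ℝ)-1) - p) * (3*((p:ℝ)-1) - j) * (3+(j:ℝ)+(p:ℝ))^(j+p)) := by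
  intro k
  set c : ℝ := 3+(j:ℝ)+(p:ℝ) with hcdef
  have hc : (0:ℝ) < c := by rw [hcdef]; positivity
  have hd1 : 3*((j:ℝ)-1) - p ≠ 0 := by intro h; exact hp (by linarith)
  have hd2 : 3*((p:ℝ)-1) - j ≠ 0 := by intro h; exact hj (by linarith)
  set Sj : ℝ := ∑ m ∈ Finset.range (j+1), (4*(j:ℝ)/c)^m with hSjdef
  set Sp : ℝ := ∑ q ∈ Finset.range (p+1), (4*(p:ℝ)/c)^q with hSpdef
  -- geometric sum identities
  have hgeom : ∀ (r : ℕ) (x : ℝ), 0 ≤ x →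
      (∑ m ∈ Finset.range (r+1), (x/c)^m) * (c^r * (x - c)) = x^(r+1) - c^(r+1) := by
    intro r x hx
    have h1 : (∑ m ∈ Finset.range (r+1), (x/c)^m) * c^r
        = ∑ m ∈ Finset.range (r+1), x^m * c^(r-m) := by
      rw [Finset.sum_mul]
      apply Finset.sum_congr rfl
      intro m hm
      have hm' : m ≤ r := by
        have := Finset.mem_range.mp hm; omega
      rw [div_pow, pow_sub₀ c hc.ne' hm']
      field_simp
    have h2 := geom_sum₂_mul x c (r+1)
    simp only [Nat.add_sub_cancel] at h2
    calc (∑ m ∈ Finset.range (r+1), (x/c)^m) * (c^r * (x - c))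
        = ((∑ m ∈ Finset.range (r+1), (x/c)^m) * c^r) * (x - c) := by ring
      _ = (∑ m ∈ Finset.range (r+1), x^m * c^(r-m)) * (x - c) := by rw [h1]
      _ = x^(r+1) - c^(r+1) := h2
  have hgj : Sj * (c^j * (3*((j:ℝ)-1) - p)) = (4*(j:ℝ))^(j+1) - c^(j+1) := by
    have e : 3*((j:ℝ)-1) - p = 4*(j:ℝ) - c := by rw [hcdef]; ring
    rw [e]; exact hgeom j (4*(j:ℝ)) (by positivity)
  have hgp : Sp * (c^p * (3*((p:ℝ)-1) - j)) = (4*(p:ℝ))^(p+1) - c^(p+1) := by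
    have e : 3*((p:ℝ)-1) - j = 4*(p:ℝ) - c := by rw [hcdef]; ring
    rw [e]; exact hgeom p (4*(p:ℝ)) (by positivity)
  -- rewrite the RHS as a product of geometric sums
  have hRHS : 2^(j+p+1) * Real.sqrt ((2*(j:ℝ)+1)*(2*(p:ℝ)+1)) *
        (((4*(j:ℝ))^(j+1) - c^(j+1)) * ((4*(p:ℝ))^(p+1) - c^(p+1)))
      / ((3*((j:ℝ)-1) - p) * (3*((p:ℝ)-1) - j) * c^(j+p))
      = 2 * (Sj * Sp * ((2^j * Real.sqrt (2*(j:ℝ)+1)) * (2^p * Real.sqrt (2*(p:ℝ)+1)))) := by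
    rw [← hgj, ← hgp, Real.sqrt_mul (by positivity), pow_add, pow_add, pow_succ]
    have hcj : c^j ≠ 0 := by positivity
    have hcp : c^p ≠ 0 := by positivity
    field_simp
    ring
  rw [hRHS]
  -- now bound the left-hand side
  have hBj := Xbound X hX j
  have hBp := Xbound X hX p
  set Bj : ℝ := 2^j * Real.sqrt (2*(j:ℝ)+1) with hBjdef
  set Bp : ℝ := 2^p * Real.sqrt (2*(p:ℝ)+1) with hBpdef
  have hBjn : 0 ≤ Bj := by rw [hBjdef]; positivity
  have hBpn : 0 ≤ Bp := by rw [hBpdef]; positivity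
  rw [crossC]
  rw [abs_mul, abs_mul]
  have h1 : |(-1:ℝ)^j| = 1 := by rw [abs_pow, abs_neg, abs_one, one_pow]
  have h2 : |1 + (-1:ℝ)^k| ≤ 2 := by
    calc |1 + (-1:ℝ)^k| ≤ |1| + |(-1:ℝ)^k| := abs_add_le _ _
      _ = 2 := by rw [abs_pow, abs_neg, abs_one, one_pow]; norm_num
  rw [h1, one_mul]
  have hsum : |∑ m ∈ Finset.range (j+1), ∑ q ∈ Finset.range (p+1),
      (((k+2+j+p).factorial : ℝ) * (4*(j:ℝ))^m * (4*(p:ℝ))^q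
          / ((k+2+j+p+m+q).factorial : ℝ)) * X j m * X p q|
      ≤ Sj * Sp * (Bj * Bp) := by
    calc |∑ m ∈ Finset.range (j+1), ∑ q ∈ Finset.range (p+1),
      (((k+2+j+p).factorial : ℝ) * (4*(j:ℝ))^m * (4*(p:ℝ))^q
          / ((k+2+j+p+m+q).factorial : ℝ)) * X j m * X p q|
        ≤ ∑ m ∈ Finset.range (j+1), ∑ q ∈ Finset.range (p+1),
          |(((k+2+j+p).factorial : ℝ) * (4*(j:ℝ))^m * (4*(p:ℝ))^q
          / ((k+2+j+p+m+q).factorial : ℝ)) * X j m * X p q| := by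
          apply le_trans (Finset.abs_sum_le_sum_abs _ _)
          exact Finset.sum_le_sum fun m _ => Finset.abs_sum_le_sum_abs _ _
      _ ≤ ∑ m ∈ Finset.range (j+1), ∑ q ∈ Finset.range (p+1),
          ((4*(j:ℝ)/c)^m * (4*(p:ℝ)/c)^q) * (Bj * Bp) := by
          apply Finset.sum_le_sum
          intro m hm
          apply Finset.sum_le_sum
          intro q hq
          have hm' : m ≤ j := by have := Finset.mem_range.mp hm; omega
          have hq' : q ≤ p := by have := Finset.mem_range.mp hq; omega
          rw [abs_mul, abs_mul, abs_of_nonneg (by positivity)]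
          have hfrac : (((k+2+j+p).factorial : ℝ) * (4*(j:ℝ))^m * (4*(p:ℝ))^q
              / ((k+2+j+p+m+q).factorial : ℝ)) ≤ (4*(j:ℝ)/c)^m * (4*(p:ℝ)/c)^q := by
            have hr := ratio_le (k+2+j+p) (m+q) (3+j+p) (by omega) (by omega)
            have hcast : ((3+j+p : ℕ):ℝ) = c := by rw [hcdef]; push_cast; ring
            rw [hcast] at hr
            have hNe : k+2+j+p+(m+q) = k+2+j+p+m+q := by omega
            rw [hNe] at hr
            calc ((k+2+j+p).factorial : ℝ) * (4*(j:ℝ))^m * (4*(p:ℝ))^q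
                / ((k+2+j+p+m+q).factorial : ℝ)
                = (((k+2+j+p).factorial : ℝ) / ((k+2+j+p+m+q).factorial : ℝ))
                  * ((4*(j:ℝ))^m * (4*(p:ℝ))^q) := by ring
              _ ≤ (1/c)^(m+q) * ((4*(j:ℝ))^m * (4*(p:ℝ))^q) := by
                  apply mul_le_mul_of_nonneg_right hr (by positivity)
              _ = (4*(j:ℝ)/c)^m * (4*(p:ℝ)/c)^q := by
                  rw [pow_add, div_pow, div_pow, div_pow, div_pow, one_pow, one_pow]
                  field_simp
          calc ((k+2+j+p).factorial : ℝ) * (4*(j:ℝ))^m * (4*(p:ℝ))^q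
                / ((k+2+j+p+m+q).factorial : ℝ) * |X j m| * |X p q|
              ≤ ((4*(j:ℝ)/c)^m * (4*(p:ℝ)/c)^q) * Bj * Bp := by
                apply mul_le_mul (mul_le_mul hfrac (hBj m hm') (abs_nonneg _) (by positivity))
                  (hBp q hq') (abs_nonneg _) (by positivity)
            _ = ((4*(j:ℝ)/c)^m * (4*(p:ℝ)/c)^q) * (Bj * Bp) := by ring
      _ = Sj * Sp * (Bj * Bp) := by
          simp only [← Finset.sum_mul]
          rw [hSjdef, hSpdef, Finset.sum_mul_sum]
  calc |1 + (-1:ℝ)^k| * |∑ m ∈ Finset.range (j+1), ∑ q ∈ Finset.range (p+1),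
      (((k+2+j+p).factorial : ℝ) * (4*(j:ℝ))^m * (4*(p:ℝ))^q
          / ((k+2+j+p+m+q).factorial : ℝ)) * X j m * X p q|
      ≤ 2 * (Sj * Sp * (Bj * Bp)) := by
        apply mul_le_mul h2 hsum (abs_nonneg _) (by norm_num)
    _ = 2 * (Sj * Sp * (Bj * Bp)) := rfl
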